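/- For fixed a > 0, every matrix B₁ = [[-b₁, λ₁'], [λ₁, -a]] with λ₁ ∈ d_F^{-1}, b₁ ∈ Z, and ab₁ - λ₁λ₁' = m/D can be written as B₁ = g_θ B₀ (g_θ')^T for a unique θ ∈ O_F and a matrix B₀ of the same form with λ₀ ∈ d_F^{-1} representing the class of λ₁ modulo a O_F; here g_θ = [[1, θ],[0,1]]. In particular, the set of such matrices with fixed a is in bijection with {λ₀ ∈ d_F^{-1}/aO_F : λ₀λ₀' ≡ -m/D mod aZ} × O_F. -/
import Mathlib


open Matrix

noncomputable section

/-- The inverse different, defined via the Galois conjugation `σ`: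
`{x ∈ F : (xy) + (xy)' ∈ ℤ for all y ∈ 𝒪_F}`. -/
def invDiff (K : Type*) [Field K] [NumberField K] (σ : K ≃ₐ[ℚ] K) : Set K :=
  {x : K | ∀ y ∈ integralClosure ℤ K, ∃ n : ℤ, x * y + σ (x * y) = (n : K)}

/-- `R ⊆ 𝔡_F⁻¹` is a complete set of representatives of the classes
`{λ₀ ∈ 𝔡_F⁻¹/a𝒪_F : λ₀λ₀' ≡ -m/D (mod aℤ)}`. -/
def IsRepSetσ (K : Type*) [Field K] [NumberField K] (σ : K ≃ₐ[ℚ] K)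
    (D m : ℤ) (a : ℕ) (R : Finset K) : Prop :=
  (∀ lam ∈ R, lam ∈ invDiff K σ ∧ ∃ n : ℤ, lam * σ lam + (m : K) / (D : K) = (a : K) * (n : K)) ∧
  ∀ mu ∈ invDiff K σ, (∃ n : ℤ, mu * σ mu + (m : K) / (D : K) = (a : K) * (n : K)) →
    ∃! lam, lam ∈ R ∧ ∃ θ ∈ integralClosure ℤ K, mu = lam - (a : K) * θ

/-- The matrix `B = [[-b, λ'], [λ, -a]]`. -/
def Bmat {K : Type*} [Field K] (σ : K → K) (a : ℕ) (lam : K) (b : ℤ) :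
    Matrix (Fin 2) (Fin 2) K := !![-(b : K), σ lam; lam, -(a : K)]

/-- The unipotent matrix `g_θ = [[1, θ], [0, 1]]`. -/
def gmat {K : Type*} [Field K] (θ : K) : Matrix (Fin 2) (Fin 2) K := !![1, θ; 0, 1]

open Polynomial in
lemma sigma_invol (K : Type*) [Field K] [NumberField K]
    (h2 : Module.finrank ℚ K = 2) (σ : K ≃ₐ[ℚ] K) (x : K) : σ (σ x) = x := by
  by_cases hx : σ x = x
  · rw [hx, hx]
  set p := minpoly ℚ x with hp
  have hint : IsIntegral ℚ x := IsIntegral.of_finite ℚ x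
  have hdle : p.natDegree ≤ 2 := h2 ▸ minpoly.natDegree_le x
  have hdge : 1 ≤ p.natDegree := minpoly.natDegree_pos hint
  have hd12 : p.natDegree = 1 ∨ p.natDegree = 2 := by omega
  rcases hd12 with hd | hd
  · exfalso
    obtain ⟨q, hq⟩ := (minpoly.natDegree_eq_one_iff).mp hd
    exact hx (by rw [← hq, AlgEquiv.commutes])
  have hroot : aeval x p = 0 := minpoly.aeval ℚ x
  have hroot' : aeval (σ x) p = 0 := by
    rw [show σ x = (σ : K →ₐ[ℚ] K) x from rfl,
      Polynomial.aeval_algHom_apply (σ : K →ₐ[ℚ] K) x p, hroot, map_zero]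
  have hlc : p.coeff 2 = 1 := by
    have hm := minpoly.monic hint
    rw [Polynomial.Monic, Polynomial.leadingCoeff, hd] at hm
    exact hm
  have hsum : ∀ y : K, aeval y p = 0 →
      y * y + ((p.coeff 1 : ℚ) : K) * y + ((p.coeff 0 : ℚ) : K) = 0 := by
    intro y hy
    have h := Polynomial.aeval_eq_sum_range (R := ℚ) (S := K) (x := y) (p := p)
    rw [hd, hy] at h
    simp [Finset.sum_range_succ, hlc, Rat.smul_def] at h
    linear_combination -h
  have h1 := hsum x hroot
  have h2' := hsum (σ x) hroot'
  have key : (x - σ x) * (x + σ x + ((p.coeff 1 : ℚ) : K)) = 0 := by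
    linear_combination h1 - h2'
  rcases mul_eq_zero.mp key with h | h
  · exact absurd (by linear_combination -h) hx
  · have hσx : σ x = -((p.coeff 1 : ℚ) : K) - x := by linear_combination h
    rw [hσx, map_sub, map_neg, map_ratCast, hσx]
    ring

lemma sigma_integral {K : Type*} [Field K] [NumberField K] (σ : K ≃ₐ[ℚ] K)
    {x : K} (hx : x ∈ integralClosure ℤ K) : σ x ∈ integralClosure ℤ K := by
  have : IsIntegral ℤ x := hx
  exact this.map ((σ : K →+* K).toIntAlgHom)

/-- For fixed `a > 0`, every matrix `B₁ = [[-b₁, λ₁'], [λ₁, -a]]` with `λ₁ ∈ 𝔡_F⁻¹`,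
`b₁ ∈ ℤ`, `ab₁ - λ₁λ₁' = m/D` can be written uniquely as `B₁ = g_θ B₀ (g_θ')ᵀ` with
`θ ∈ 𝒪_F` and `B₀` of the same form with `λ₀` running over representatives of
`𝔡_F⁻¹/a𝒪_F` satisfying the congruence; so these matrices are in bijection with
the product of the set of classes and `𝒪_F`. -/
theorem Bmat_unique_decomposition (K : Type*) [Field K] [NumberField K]
    (h2 : Module.finrank ℚ K = 2) (σ : K ≃ₐ[ℚ] K) (hσ : σ ≠ AlgEquiv.refl)
    (D m : ℤ) (hD : D = NumberField.discr K) (a : ℕ) (ha : 0 < a)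
    (R : Finset K) (hR : IsRepSetσ K σ D m a R)
    (lam₁ : K) (b₁ : ℤ) (hlam₁ : lam₁ ∈ invDiff K σ)
    (hdet : (a : K) * (b₁ : K) - lam₁ * σ lam₁ = (m : K) / (D : K)) :
    ∃! q : K × K, (q.1 ∈ R ∧ q.2 ∈ integralClosure ℤ K) ∧
      ∃ b₀ : ℤ, (a : K) * (b₀ : K) - q.1 * σ q.1 = (m : K) / (D : K) ∧
        Bmat (σ : K → K) a lam₁ b₁ =
          gmat q.2 * Bmat (σ : K → K) a q.1 b₀ * ((gmat q.2).map (σ : K → K))ᵀ := by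
  have hinv : ∀ x : K, σ (σ x) = x := sigma_invol K h2 σ
  have haK : (a : K) ≠ 0 := Nat.cast_ne_zero.mpr ha.ne'
  obtain ⟨lam₀, ⟨hlam₀R, θ₀, hθ₀O, hmu⟩, huniq⟩ :=
    hR.2 lam₁ hlam₁ ⟨b₁, by linear_combination -hdet⟩
  obtain ⟨-, n, hn⟩ := hR.1 lam₀ hlam₀R
  set θ : K := σ θ₀ with hθ
  have hθO : θ ∈ integralClosure ℤ K := sigma_integral σ hθ₀O
  have hσθ : σ θ = θ₀ := hinv θ₀
  -- key facts
  have hlam1 : lam₁ = lam₀ - (a : K) * σ θ := by rw [hσθ]; exact hmu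
  have hσlam1 : σ lam₁ = σ lam₀ - (a : K) * θ := by
    rw [hlam1, _root_.map_sub, _root_.map_mul, map_natCast, hinv]
  have hb₀ : (a : K) * (n : K) - lam₀ * σ lam₀ = (m : K) / (D : K) := by
    linear_combination -hn
  -- matrix identity
  have hmatrix : ∀ (lam θ' : K) (b : ℤ),
      lam₁ = lam - (a : K) * σ θ' → σ lam₁ = σ lam - (a : K) * θ' →
      (a : K) * (b : K) - lam * σ lam = (m : K) / (D : K) →
      Bmat (σ : K → K) a lam₁ b₁ =
        gmat θ' * Bmat (σ : K → K) a lam b * ((gmat θ').map (σ : K → K))ᵀ := by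
    intro lam θ' b hl hsl hb
    have hσ1 : σ (1 : K) = 1 := map_one σ
    have hσ0 : σ (0 : K) = 0 := map_zero σ
    have hd2 : (a : K) * (b₁ : K) - (lam - (a:K) * σ θ') * (σ lam - (a:K) * θ')
        = (m : K) / (D : K) := by rw [← hl, ← hsl]; exact hdet
    have hb1 : (b₁ : K) = (b : K) - lam * θ' - σ lam * σ θ' + (a : K) * θ' * σ θ' := by
      apply mul_left_cancel₀ haK
      linear_combination hd2 - hb
    ext i j
    fin_cases i <;> fin_cases j <;>
      simp [Bmat, gmat, Matrix.mul_apply, Fin.sum_univ_two, Matrix.transpose_apply,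
        Matrix.map_apply, hσ1, hσ0]
    · -- (0,0) entry
      linear_combination -hb1
    · linear_combination hsl
    · linear_combination hl
  refine ⟨(lam₀, θ), ⟨⟨hlam₀R, hθO⟩, n, hb₀, hmatrix lam₀ θ n hlam1 hσlam1 hb₀⟩, ?_⟩
  rintro ⟨lam, θ'⟩ ⟨⟨hlamR, hθ'O⟩, b, hb, hmat⟩
  -- extract entry (1,0) from the matrix equation
  have h10 : lam₁ = lam - (a : K) * σ θ' := by
    have := congrArg (fun M : Matrix (Fin 2) (Fin 2) K => M 1 0) hmat
    simp [Bmat, gmat, Matrix.mul_apply, Fin.sum_univ_two, Matrix.transpose_apply,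
      Matrix.map_apply] at this
    linear_combination this
  have hlam_eq : lam = lam₀ :=
    huniq lam ⟨hlamR, σ θ', sigma_integral σ hθ'O, h10⟩
  have hθeq : θ' = θ := by
    have hσ' : σ θ' = σ θ := by
      have : (a : K) * σ θ' = (a : K) * σ θ := by
        rw [hlam_eq] at h10
        linear_combination h10 - hlam1
      exact mul_left_cancel₀ haK this
    have := congrArg σ hσ'
    rwa [hinv, hinv] at this
  simp [Prod.ext_iff, hlam_eq, hθeq]


end
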